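/- Let H ≤ GL(d,ℝ) be a closed subgroup possessing an open dual orbit 𝒪₁ = {hᵀξ₀ : h ∈ H} for some ξ₀ ∈ ℝ^d, and assume the complement 𝒪₁^c contains 0 and is closed under multiplication by positive scalars. Let g ∈ GL(d,ℝ) and H_g = g⁻¹Hg. Then 𝒪₂ := gᵀ𝒪₁ equals the dual orbit {hᵀ(gᵀξ₀) : h ∈ H_g} of H_g and is open, and there exist constants 0 < c₁ ≤ c₂ such that for all ξ ∈ 𝒪₁: c₁·A_{𝒪₁}(ξ) ≤ A_{𝒪₂}(gᵀξ) ≤ c₂·A_{𝒪₁}(ξ). -/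

import Mathlib

open MeasureTheory Matrix Metric

noncomputable section

variable {n : Type*} [Fintype n] [DecidableEq n]

/-- The dual action `ξ ↦ hᵀ ξ` of a matrix on Euclidean space. -/
def dualAct (h : Matrix n n ℝ) (ξ : EuclideanSpace ℝ n) : EuclideanSpace ℝ n :=
  (EuclideanSpace.equiv n ℝ).symm (h.transpose.mulVec (EuclideanSpace.equiv n ℝ ξ))

/-- The envelope function `A_S` of a set `S` (with respect to Euclidean norm and distance). -/
def env (S : Set (EuclideanSpace ℝ n)) (ξ : EuclideanSpace ℝ n) : ℝ :=
  min (infDist ξ S / (1 + Real.sqrt (‖ξ‖ ^ 2 - infDist ξ S ^ 2))) (1 / (1 + ‖ξ‖))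

end

noncomputable section AuxProof

variable {n : Type*} [Fintype n] [DecidableEq n]

lemma dualAct_dualAct (A B : Matrix n n ℝ) (ξ : EuclideanSpace ℝ n) :
    dualAct A (dualAct B ξ) = dualAct (B * A) ξ := by
  simp [dualAct, Matrix.mulVec_mulVec, Matrix.transpose_mul]
  rw [← Matrix.mulVec_mulVec]; rfl

lemma dualAct_one (ξ : EuclideanSpace ℝ n) :
    dualAct (1 : Matrix n n ℝ) ξ = ξ := by
  simp [dualAct]

lemma dualAct_units_mul (a b : GL n ℝ) (ξ : EuclideanSpace ℝ n) :
    dualAct (↑a) (dualAct (↑b) ξ) = dualAct (↑(b * a) : Matrix n n ℝ) ξ := by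
  rw [dualAct_dualAct]; rfl

lemma dualAct_cancel_left (g : GL n ℝ) (x : EuclideanSpace ℝ n) :
    dualAct (↑g⁻¹) (dualAct (↑g) x) = x := by
  rw [dualAct_units_mul, mul_inv_cancel, Units.val_one, dualAct_one]

lemma dualAct_cancel_right (g : GL n ℝ) (x : EuclideanSpace ℝ n) :
    dualAct (↑g) (dualAct (↑g⁻¹) x) = x := by
  rw [dualAct_units_mul, inv_mul_cancel, Units.val_one, dualAct_one]

/-- The dual action of an invertible matrix as a continuous linear equivalence. -/
def dualEquiv {d : ℕ} (g : GL (Fin d) ℝ) :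
    EuclideanSpace ℝ (Fin d) ≃L[ℝ] EuclideanSpace ℝ (Fin d) :=
  LinearEquiv.toContinuousLinearEquiv
    { toFun := dualAct (↑g)
      invFun := dualAct (↑g⁻¹)
      map_add' := by
        intro x y
        simp [dualAct, Matrix.mulVec_add, map_add]
      map_smul' := by
        intro c x
        simp [dualAct, Matrix.mulVec_smul, _root_.map_smul]
      left_inv := dualAct_cancel_left g
      right_inv := dualAct_cancel_right g }

lemma dualEquiv_apply {d : ℕ} (g : GL (Fin d) ℝ) (ξ : EuclideanSpace ℝ (Fin d)) :
    dualEquiv g ξ = dualAct (↑g) ξ := rfl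

/-- Images contract `infDist` up to a Lipschitz constant. -/
lemma infDist_image_le {α β : Type*} [MetricSpace α] [MetricSpace β] (T : α → β) {b : ℝ}
    (hb : 0 < b) (hT : ∀ u v, dist (T u) (T v) ≤ b * dist u v) {s : Set α} (hs : s.Nonempty)
    (x : α) : infDist (T x) (T '' s) ≤ b * infDist x s := by
  refine le_of_forall_pos_le_add fun ε hε => ?_
  obtain ⟨y, hy, hdy⟩ := (infDist_lt_iff hs).1
    (lt_add_of_pos_right (infDist x s) (div_pos hε hb))
  calc infDist (T x) (T '' s) ≤ dist (T x) (T y) := infDist_le_dist_of_mem ⟨y, hy, rfl⟩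
    _ ≤ b * dist x y := hT x y
    _ ≤ b * (infDist x s + ε / b) := by nlinarith
    _ = b * infDist x s + ε := by field_simp

/-- The envelope is comparable to `min(dist, 1)/(1 + ‖ξ‖)`. -/
lemma env_bounds {S : Set (EuclideanSpace ℝ n)} (h0 : (0 : EuclideanSpace ℝ n) ∈ S)
    (ξ : EuclideanSpace ℝ n) :
    min (infDist ξ S) 1 / (1 + ‖ξ‖) ≤ env S ξ ∧
      env S ξ ≤ 3 * (min (infDist ξ S) 1 / (1 + ‖ξ‖)) := by
  set D := infDist ξ S with hD
  set r := ‖ξ‖ with hr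
  have hD0 : 0 ≤ D := infDist_nonneg
  have hr0 : 0 ≤ r := norm_nonneg _
  have hDr : D ≤ r := by
    have h1 : infDist ξ S ≤ dist ξ 0 := infDist_le_dist_of_mem h0
    simpa [dist_zero_right] using h1
  set s := Real.sqrt (r ^ 2 - D ^ 2) with hs
  have hs0 : 0 ≤ s := Real.sqrt_nonneg _
  have hsr : s ≤ r := by
    have h1 : Real.sqrt (r ^ 2 - D ^ 2) ≤ Real.sqrt (r ^ 2) :=
      Real.sqrt_le_sqrt (by nlinarith)
    rwa [Real.sqrt_sq hr0] at h1
  have hs_sq : s ^ 2 = r ^ 2 - D ^ 2 := Real.sq_sqrt (by nlinarith)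
  have h1s : (0 : ℝ) < 1 + s := by linarith
  have h1r : (0 : ℝ) < 1 + r := by linarith
  have henv : env S ξ = min (D / (1 + s)) (1 / (1 + r)) := rfl
  constructor
  · rw [henv]
    refine le_min ?_ ?_
    · exact div_le_div₀ hD0 (min_le_left _ _) h1s (by linarith)
    · exact div_le_div₀ zero_le_one (min_le_right _ _) h1r le_rfl
  · rcases le_or_gt 1 D with h1 | h1
    · have hle : env S ξ ≤ 1 / (1 + r) := by rw [henv]; exact min_le_right _ _
      rw [min_eq_right h1]
      have : (0 : ℝ) ≤ 1 / (1 + r) := by positivity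
      linarith
    · have key : 1 + r ≤ 3 * (1 + s) := by
        rcases le_or_gt r 2 with h2 | h2
        · linarith
        · have h9 : r ^ 2 ≤ (3 * s) ^ 2 := by nlinarith
          have : r ≤ 3 * s := by nlinarith
          linarith
      have hle : env S ξ ≤ D / (1 + s) := by rw [henv]; exact min_le_left _ _
      have h2 : D / (1 + s) ≤ 3 * (D / (1 + r)) := by
        rw [mul_div_assoc', div_le_div_iff₀ h1s h1r]
        nlinarith
      rw [min_eq_left h1.le]
      linarith

/-- Envelope comparison under a continuous linear equivalence. -/
lemma env_comp {d : ℕ} (T : EuclideanSpace ℝ (Fin d) ≃L[ℝ] EuclideanSpace ℝ (Fin d))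
    {S : Set (EuclideanSpace ℝ (Fin d))} (h0 : (0 : EuclideanSpace ℝ (Fin d)) ∈ S) :
    ∃ c₁ c₂ : ℝ, 0 < c₁ ∧ c₁ ≤ c₂ ∧ ∀ ξ,
      c₁ * env S ξ ≤ env (T '' S) (T ξ) ∧ env (T '' S) (T ξ) ≤ c₂ * env S ξ := by
  set b : ℝ := max ‖(T : EuclideanSpace ℝ (Fin d) →L[ℝ] EuclideanSpace ℝ (Fin d))‖ 1 with hbdef
  set m : ℝ := max ‖(T.symm : EuclideanSpace ℝ (Fin d) →L[ℝ] EuclideanSpace ℝ (Fin d))‖ 1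
    with hmdef
  have hb1 : (1 : ℝ) ≤ b := le_max_right _ _
  have hm1 : (1 : ℝ) ≤ m := le_max_right _ _
  have hbpos : (0 : ℝ) < b := by linarith
  have hmpos : (0 : ℝ) < m := by linarith
  set a : ℝ := m⁻¹ with hadef
  have hapos : (0 : ℝ) < a := by positivity
  have ha1 : a ≤ 1 := by
    rw [hadef]
    exact inv_le_one_of_one_le₀ hm1
  have ham : a * m = 1 := inv_mul_cancel₀ (ne_of_gt hmpos)
  have hub : ∀ x : EuclideanSpace ℝ (Fin d), ‖T x‖ ≤ b * ‖x‖ := by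
    intro x
    calc ‖T x‖ ≤ ‖(T : EuclideanSpace ℝ (Fin d) →L[ℝ] EuclideanSpace ℝ (Fin d))‖ * ‖x‖ :=
          (T : EuclideanSpace ℝ (Fin d) →L[ℝ] EuclideanSpace ℝ (Fin d)).le_opNorm x
      _ ≤ b * ‖x‖ := by
          have : (0 : ℝ) ≤ ‖x‖ := norm_nonneg _
          nlinarith [le_max_left ‖(T : EuclideanSpace ℝ (Fin d) →L[ℝ] EuclideanSpace ℝ (Fin d))‖
            (1 : ℝ)]
  have hsub : ∀ y : EuclideanSpace ℝ (Fin d), ‖T.symm y‖ ≤ m * ‖y‖ := by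
    intro y
    calc ‖T.symm y‖
        ≤ ‖(T.symm : EuclideanSpace ℝ (Fin d) →L[ℝ] EuclideanSpace ℝ (Fin d))‖ * ‖y‖ :=
          (T.symm : EuclideanSpace ℝ (Fin d) →L[ℝ] EuclideanSpace ℝ (Fin d)).le_opNorm y
      _ ≤ m * ‖y‖ := by
          have : (0 : ℝ) ≤ ‖y‖ := norm_nonneg _
          nlinarith [le_max_left
            ‖(T.symm : EuclideanSpace ℝ (Fin d) →L[ℝ] EuclideanSpace ℝ (Fin d))‖ (1 : ℝ)]
  have hlb : ∀ x : EuclideanSpace ℝ (Fin d), a * ‖x‖ ≤ ‖T x‖ := by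
    intro x
    have h1 : ‖x‖ ≤ m * ‖T x‖ := by
      have := hsub (T x)
      simpa using this
    calc a * ‖x‖ ≤ a * (m * ‖T x‖) := by nlinarith
      _ = ‖T x‖ := by rw [← mul_assoc, ham, one_mul]
  have hdistT : ∀ u v : EuclideanSpace ℝ (Fin d), dist (T u) (T v) ≤ b * dist u v := by
    intro u v
    rw [dist_eq_norm, dist_eq_norm, ← map_sub]
    exact hub _
  have hdistTsymm : ∀ u v : EuclideanSpace ℝ (Fin d),
      dist (T.symm u) (T.symm v) ≤ m * dist u v := by
    intro u v
    rw [dist_eq_norm, dist_eq_norm, ← map_sub]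
    exact hsub _
  have hSne : S.Nonempty := ⟨0, h0⟩
  have h0' : (0 : EuclideanSpace ℝ (Fin d)) ∈ T '' S := ⟨0, h0, map_zero T⟩
  have hTSne : (T '' S).Nonempty := ⟨0, h0'⟩
  have hsymm_img : T.symm '' (T '' S) = S := by
    ext x
    constructor
    · rintro ⟨y, ⟨z, hz, rfl⟩, rfl⟩
      simpa using hz
    · intro hx
      exact ⟨T x, ⟨x, hx, rfl⟩, T.symm_apply_apply x⟩
  refine ⟨a / (3 * b), 3 * b / a, by positivity, ?_, ?_⟩
  · rw [div_le_div_iff₀ (by positivity) hapos]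
    nlinarith
  intro ξ
  set D : ℝ := infDist ξ S with hDdef
  set D' : ℝ := infDist (T ξ) (T '' S) with hD'def
  have hD0 : 0 ≤ D := infDist_nonneg
  have hD'0 : 0 ≤ D' := infDist_nonneg
  have hDub : D' ≤ b * D := infDist_image_le T hbpos hdistT hSne ξ
  have hDlb : a * D ≤ D' := by
    have h1 : infDist (T.symm (T ξ)) (T.symm '' (T '' S)) ≤ m * D' :=
      infDist_image_le T.symm hmpos hdistTsymm hTSne (T ξ)
    rw [T.symm_apply_apply, hsymm_img] at h1
    calc a * D ≤ a * (m * D') := by nlinarith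
      _ = D' := by rw [← mul_assoc, ham, one_mul]
  have hnub : 1 + ‖T ξ‖ ≤ b * (1 + ‖ξ‖) := by
    have := hub ξ
    have h1 : (0 : ℝ) ≤ ‖ξ‖ := norm_nonneg _
    nlinarith
  have hnlb : a * (1 + ‖ξ‖) ≤ 1 + ‖T ξ‖ := by
    have := hlb ξ
    nlinarith [norm_nonneg (T ξ)]
  have hm1' : a * min D 1 ≤ min D' 1 := by
    rcases le_total D 1 with h | h
    · rw [min_eq_left h]
      exact le_min (by nlinarith) (by nlinarith)
    · rw [min_eq_right h]
      exact le_min (by nlinarith) (by nlinarith)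
  have hm2' : min D' 1 ≤ b * min D 1 := by
    rcases le_total D 1 with h | h
    · rw [min_eq_left h]
      exact (min_le_left _ _).trans hDub
    · rw [min_eq_right h]
      exact (min_le_right _ _).trans (by linarith)
  have hmin0 : 0 ≤ min D 1 := le_min hD0 zero_le_one
  have hmin0' : 0 ≤ min D' 1 := le_min hD'0 zero_le_one
  have hpos1 : (0 : ℝ) < 1 + ‖ξ‖ := by nlinarith [norm_nonneg ξ]
  have hpos2 : (0 : ℝ) < 1 + ‖T ξ‖ := by nlinarith [norm_nonneg (T ξ)]
  have hBlb : a / b * (min D 1 / (1 + ‖ξ‖)) ≤ min D' 1 / (1 + ‖T ξ‖) := by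
    rw [div_mul_div_comm]
    exact div_le_div₀ hmin0' hm1' hpos2 hnub
  have hBub : min D' 1 / (1 + ‖T ξ‖) ≤ b / a * (min D 1 / (1 + ‖ξ‖)) := by
    rw [div_mul_div_comm]
    exact div_le_div₀ (by positivity) hm2' (by positivity) hnlb
  obtain ⟨hA1, hA2⟩ := env_bounds h0 ξ
  obtain ⟨hA1', hA2'⟩ := env_bounds h0' (T ξ)
  rw [← hDdef] at hA1 hA2
  rw [← hD'def] at hA1' hA2'
  constructor
  · calc a / (3 * b) * env S ξ
        ≤ a / (3 * b) * (3 * (min D 1 / (1 + ‖ξ‖))) :=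
          mul_le_mul_of_nonneg_left hA2 (by positivity)
      _ = a / b * (min D 1 / (1 + ‖ξ‖)) := by
          field_simp
      _ ≤ min D' 1 / (1 + ‖T ξ‖) := hBlb
      _ ≤ env (T '' S) (T ξ) := hA1'
  · calc env (T '' S) (T ξ)
        ≤ 3 * (min D' 1 / (1 + ‖T ξ‖)) := hA2'
      _ ≤ 3 * (b / a * (min D 1 / (1 + ‖ξ‖))) :=
          mul_le_mul_of_nonneg_left hBub (by norm_num)
      _ = 3 * b / a * (min D 1 / (1 + ‖ξ‖)) := by
          field_simp
      _ ≤ 3 * b / a * env S ξ :=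
          mul_le_mul_of_nonneg_left hA1 (by positivity)

end AuxProof

/-- If `H ≤ GL(d,ℝ)` is a closed subgroup with open dual orbit
`𝒪₁ = {hᵀξ₀ : h ∈ H}` whose complement contains `0` and is stable under positive dilations,
and `g ∈ GL(d,ℝ)`, then `𝒪₂ = gᵀ𝒪₁` is the (open) dual orbit of `H_g = g⁻¹Hg` through `gᵀξ₀`,
and the envelope functions satisfy `c₁·A_{𝒪₁}(ξ) ≤ A_{𝒪₂}(gᵀξ) ≤ c₂·A_{𝒪₁}(ξ)` on `𝒪₁`. -/
theorem stmt1 (d : ℕ) (H : Subgroup (GL (Fin d) ℝ))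
    (hHclosed : IsClosed (H : Set (GL (Fin d) ℝ)))
    (ξ₀ : EuclideanSpace ℝ (Fin d))
    (O₁ : Set (EuclideanSpace ℝ (Fin d)))
    (hO₁ : O₁ = {ξ | ∃ h : GL (Fin d) ℝ, h ∈ H ∧ dualAct (↑h) ξ₀ = ξ})
    (hO₁open : IsOpen O₁)
    (h0 : (0 : EuclideanSpace ℝ (Fin d)) ∈ O₁ᶜ)
    (hscal : ∀ t : ℝ, 0 < t → ∀ ξ ∈ O₁ᶜ, t • ξ ∈ O₁ᶜ)
    (g : GL (Fin d) ℝ) :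
    dualAct (↑g) '' O₁ =
        {ξ | ∃ h : GL (Fin d) ℝ,
          h ∈ Subgroup.map (MulAut.conj g⁻¹).toMonoidHom H ∧
          dualAct (↑h) (dualAct (↑g) ξ₀) = ξ} ∧
      IsOpen (dualAct (↑g) '' O₁) ∧
      ∃ c₁ c₂ : ℝ, 0 < c₁ ∧ c₁ ≤ c₂ ∧
        ∀ ξ ∈ O₁,
          c₁ * env O₁ᶜ ξ ≤ env (dualAct (↑g) '' O₁)ᶜ (dualAct (↑g) ξ) ∧
            env (dualAct (↑g) '' O₁)ᶜ (dualAct (↑g) ξ) ≤ c₂ * env O₁ᶜ ξ := by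
  have hTcoe : (dualEquiv g : EuclideanSpace ℝ (Fin d) → EuclideanSpace ℝ (Fin d)) =
      dualAct (↑g) := rfl
  refine ⟨?_, ?_, ?_⟩
  · subst hO₁
    ext ξ
    simp only [Set.mem_image, Set.mem_setOf_eq, Subgroup.mem_map,
      MulEquiv.coe_toMonoidHom, MulAut.conj_apply]
    constructor
    · rintro ⟨x, ⟨h, hH, rfl⟩, rfl⟩
      refine ⟨g⁻¹ * h * g⁻¹⁻¹, ⟨h, hH, rfl⟩, ?_⟩
      rw [dualAct_units_mul, dualAct_units_mul]
      have : g * (g⁻¹ * h * g⁻¹⁻¹) = h * g := by group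
      rw [this]
    · rintro ⟨h', ⟨h, hH, rfl⟩, rfl⟩
      refine ⟨dualAct (↑h) ξ₀, ⟨h, hH, rfl⟩, ?_⟩
      rw [dualAct_units_mul, dualAct_units_mul]
      have : g * (g⁻¹ * h * g⁻¹⁻¹) = h * g := by group
      rw [this]
  · rw [← hTcoe]
    exact (dualEquiv g).toHomeomorph.isOpenMap O₁ hO₁open
  · obtain ⟨c₁, c₂, hc₁, hc, hcmp⟩ := env_comp (dualEquiv g) h0
    have himg : (dualAct (↑g : Matrix (Fin d) (Fin d) ℝ) '' O₁)ᶜ = dualEquiv g '' O₁ᶜ := by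
      rw [← hTcoe]
      exact (Set.image_compl_eq (dualEquiv g).bijective).symm
    refine ⟨c₁, c₂, hc₁, hc, fun ξ _ => ?_⟩
    rw [himg, ← hTcoe]
    exact hcmp ξ
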